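/- Let $P = (p_n)$ and $Q = (q_n)$ be sequences of integers with $p_n, q_n \geq 2$, and let $t \geq 1$ be such that $p_n = q_n$ for all $n > t$. Define $\psi_{P,Q}(x) = \sum_{n=1}^{\infty} \frac{\min(E_n, q_n - 1)}{q_1 \cdots q_n}$, where $x = E_0.E_1E_2\cdots$ is the $P$-Cantor series expansion of $x$. Then for all real $x$, $\psi_{P,Q}(x) = \frac{p_1 \cdots p_t}{q_1 \cdots q_t} \cdot \{x\} + \left( \sum_{n=1}^{t} \frac{\min(E_n, q_n-1)}{q_1 \cdots q_n} - \frac{p_1 \cdots p_t}{q_1 \cdots q_t} \sum_{n=1}^{t} \frac{E_n}{p_1 \cdots p_n} \right)$; in particular $\psi_{P,Q}$ is piecewise linear with slope $\frac{p_1\cdots p_t}{q_1\cdots q_t}$. -/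

import Mathlib

/-- The `n`-th digit (0-indexed, representing `E_{n+1}`) of the `P`-Cantor series
expansion of `x`. -/
noncomputable def cantorDigit (p : ℕ → ℕ) (x : ℝ) (n : ℕ) : ℕ :=
  (⌊(∏ i ∈ Finset.range (n + 1), (p i : ℝ)) * Int.fract x⌋).toNat % p n

/-- The function `ψ_{P,Q}`. -/
noncomputable def psiPQ (p q : ℕ → ℕ) (x : ℝ) : ℝ :=
  ∑' n : ℕ, (min (cantorDigit p x n) (q n - 1) : ℝ) / ∏ i ∈ Finset.range (n + 1), (q i : ℝ)

open Finset Filter Topology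

private lemma prodPos (p : ℕ → ℕ) (hp : ∀ n, 2 ≤ p n) (N : ℕ) :
    0 < ∏ i ∈ range N, (p i : ℝ) := by
  apply Finset.prod_pos
  intro i _
  have := hp i
  positivity

private lemma prodGe (p : ℕ → ℕ) (hp : ∀ n, 2 ≤ p n) (N : ℕ) :
    (2 : ℝ) ^ N ≤ ∏ i ∈ range N, (p i : ℝ) := by
  have h : (2:ℝ) ^ N = ∏ _i ∈ range N, (2:ℝ) := by simp
  rw [h]
  apply Finset.prod_le_prod (fun i _ => by norm_num)
  intro i _
  exact_mod_cast hp i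

/-- key recurrence for the integer parts -/
private lemma floor_rec (p : ℕ → ℕ) (hp : ∀ n, 2 ≤ p n) (x : ℝ) (n : ℕ) :
    (⌊(∏ i ∈ Finset.range (n + 1), (p i : ℝ)) * Int.fract x⌋).toNat
      = p n * (⌊(∏ i ∈ Finset.range n, (p i : ℝ)) * Int.fract x⌋).toNat + cantorDigit p x n := by
  set y : ℝ := (∏ i ∈ Finset.range n, (p i : ℝ)) * Int.fract x with hy
  have hppos : (0:ℝ) < p n := by have := hp n; positivity
  have hy0 : 0 ≤ y := mul_nonneg (prodPos p hp n).le (Int.fract_nonneg x)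
  have hm : 0 ≤ ⌊y⌋ := Int.floor_nonneg.2 hy0
  set e : ℤ := ⌊(p n : ℝ) * Int.fract y⌋ with he
  have he0 : 0 ≤ e := Int.floor_nonneg.2 (mul_nonneg hppos.le (Int.fract_nonneg y))
  have he1 : e < (p n : ℤ) := by
    apply Int.floor_lt.2
    push_cast
    calc (p n : ℝ) * Int.fract y < (p n : ℝ) * 1 :=
          mul_lt_mul_of_pos_left (Int.fract_lt_one y) hppos
      _ = p n := mul_one _
  have hfl : ⌊(∏ i ∈ Finset.range (n + 1), (p i : ℝ)) * Int.fract x⌋ = (p n : ℤ) * ⌊y⌋ + e := by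
    have h1 : (∏ i ∈ Finset.range (n + 1), (p i : ℝ)) * Int.fract x = (p n : ℝ) * y := by
      rw [Finset.prod_range_succ, hy]; ring
    have h2 : (p n : ℝ) * y = (p n : ℝ) * Int.fract y + ((p n : ℤ) * ⌊y⌋ : ℤ) := by
      push_cast
      rw [Int.fract]
      ring
    rw [h1, h2, Int.floor_add_intCast, he]
    ring
  have hnat : ((p n : ℤ) * ⌊y⌋ + e) = ((p n * ⌊y⌋.toNat + e.toNat : ℕ) : ℤ) := by
    push_cast [Int.toNat_of_nonneg hm, Int.toNat_of_nonneg he0]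
    ring
  have hA : (⌊(∏ i ∈ Finset.range (n + 1), (p i : ℝ)) * Int.fract x⌋).toNat
      = p n * ⌊y⌋.toNat + e.toNat := by
    rw [hfl, hnat, Int.toNat_natCast]
  have hed : e.toNat < p n := by omega
  have hd : cantorDigit p x n = e.toNat := by
    rw [cantorDigit, hA, Nat.mul_add_mod, Nat.mod_eq_of_lt hed]
  rw [hA, hd, hy]

private lemma partial_sum_eq (p : ℕ → ℕ) (hp : ∀ n, 2 ≤ p n) (x : ℝ) (N : ℕ) :
    ∑ n ∈ Finset.range N, (cantorDigit p x n : ℝ) / ∏ i ∈ Finset.range (n + 1), (p i : ℝ)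
      = ((⌊(∏ i ∈ Finset.range N, (p i : ℝ)) * Int.fract x⌋).toNat : ℝ)
          / ∏ i ∈ Finset.range N, (p i : ℝ) := by
  induction N with
  | zero => simp [Int.floor_fract]
  | succ N ih =>
    rw [Finset.sum_range_succ, ih, floor_rec p hp x N]
    have h1 : (0:ℝ) < ∏ i ∈ Finset.range N, (p i : ℝ) := prodPos p hp N
    have h3 : (∏ i ∈ Finset.range (N + 1), (p i : ℝ))
        = (∏ i ∈ Finset.range N, (p i : ℝ)) * p N := Finset.prod_range_succ _ _
    have hppos : (0:ℝ) < p N := by have := hp N; positivity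
    rw [h3]
    push_cast
    field_simp

private lemma hasSum_digits (p : ℕ → ℕ) (hp : ∀ n, 2 ≤ p n) (x : ℝ) :
    HasSum (fun n => (cantorDigit p x n : ℝ) / ∏ i ∈ Finset.range (n + 1), (p i : ℝ))
      (Int.fract x) := by
  rw [hasSum_iff_tendsto_nat_of_nonneg
    (fun n => div_nonneg (Nat.cast_nonneg _) (prodPos p hp (n + 1)).le)]
  have heq : ∀ N : ℕ,
      ∑ i ∈ Finset.range N, (cantorDigit p x i : ℝ) / ∏ j ∈ Finset.range (i + 1), (p j : ℝ)
      = ((⌊(∏ i ∈ Finset.range N, (p i : ℝ)) * Int.fract x⌋).toNat : ℝ)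
          / ∏ i ∈ Finset.range N, (p i : ℝ) := partial_sum_eq p hp x
  simp only [heq]
  have hinv : Tendsto (fun N : ℕ => 1 / ∏ i ∈ Finset.range N, (p i : ℝ)) atTop (𝓝 0) := by
    apply squeeze_zero (g := fun N : ℕ => (1/2 : ℝ) ^ N) (fun N => by positivity)
    · intro N
      have h2 : (1/2:ℝ) ^ N = 1 / 2 ^ N := by rw [div_pow, one_pow]
      rw [h2]
      exact one_div_le_one_div_of_le (by positivity) (prodGe p hp N)
    · exact tendsto_pow_atTop_nhds_zero_of_lt_one (by norm_num) (by norm_num)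
  have hlow : Tendsto (fun N : ℕ => Int.fract x - 1 / ∏ i ∈ Finset.range N, (p i : ℝ)) atTop
      (𝓝 (Int.fract x)) := by
    have := (tendsto_const_nhds (x := Int.fract x) (f := atTop (α := ℕ))).sub hinv
    simpa using this
  apply tendsto_of_tendsto_of_tendsto_of_le_of_le hlow tendsto_const_nhds
  · intro N
    dsimp only
    have hP : (0:ℝ) < ∏ i ∈ Finset.range N, (p i : ℝ) := prodPos p hp N
    have hf0 : 0 ≤ ⌊(∏ i ∈ Finset.range N, (p i : ℝ)) * Int.fract x⌋ :=
      Int.floor_nonneg.2 (mul_nonneg hP.le (Int.fract_nonneg x))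
    have hcast : ((⌊(∏ i ∈ Finset.range N, (p i : ℝ)) * Int.fract x⌋).toNat : ℝ)
        = (⌊(∏ i ∈ Finset.range N, (p i : ℝ)) * Int.fract x⌋ : ℝ) := by
      exact_mod_cast congrArg (Int.cast : ℤ → ℝ) (Int.toNat_of_nonneg hf0)
    rw [hcast, sub_le_iff_le_add, ← add_div, le_div_iff₀ hP]
    have := Int.sub_one_lt_floor ((∏ i ∈ Finset.range N, (p i : ℝ)) * Int.fract x)
    nlinarith [this]
  · intro N
    dsimp only
    have hP : (0:ℝ) < ∏ i ∈ Finset.range N, (p i : ℝ) := prodPos p hp N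
    have hf0 : 0 ≤ ⌊(∏ i ∈ Finset.range N, (p i : ℝ)) * Int.fract x⌋ :=
      Int.floor_nonneg.2 (mul_nonneg hP.le (Int.fract_nonneg x))
    have hcast : ((⌊(∏ i ∈ Finset.range N, (p i : ℝ)) * Int.fract x⌋).toNat : ℝ)
        = (⌊(∏ i ∈ Finset.range N, (p i : ℝ)) * Int.fract x⌋ : ℝ) := by
      exact_mod_cast congrArg (Int.cast : ℤ → ℝ) (Int.toNat_of_nonneg hf0)
    rw [hcast, div_le_iff₀ hP]
    have := Int.floor_le ((∏ i ∈ Finset.range N, (p i : ℝ)) * Int.fract x)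
    nlinarith [this]

theorem stmt6 (p q : ℕ → ℕ) (hp : ∀ n, 2 ≤ p n) (hq : ∀ n, 2 ≤ q n)
    (t : ℕ) (ht : 1 ≤ t) (heq : ∀ n, t ≤ n → p n = q n) (x : ℝ) :
    psiPQ p q x =
      (∏ i ∈ Finset.range t, (p i : ℝ)) / (∏ i ∈ Finset.range t, (q i : ℝ)) * Int.fract x +
        ((∑ n ∈ Finset.range t,
            (min (cantorDigit p x n) (q n - 1) : ℝ) / ∏ i ∈ Finset.range (n + 1), (q i : ℝ)) -
          (∏ i ∈ Finset.range t, (p i : ℝ)) / (∏ i ∈ Finset.range t, (q i : ℝ)) *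
            ∑ n ∈ Finset.range t,
              (cantorDigit p x n : ℝ) / ∏ i ∈ Finset.range (n + 1), (p i : ℝ)) := by
  classical
  set F := Int.fract x with hF
  set c : ℝ := (∏ i ∈ Finset.range t, (p i : ℝ)) / (∏ i ∈ Finset.range t, (q i : ℝ)) with hc
  set g : ℕ → ℝ :=
    fun n => (cantorDigit p x n : ℝ) / ∏ i ∈ Finset.range (n + 1), (p i : ℝ) with hgdef
  set f : ℕ → ℝ := fun n =>
    (min (cantorDigit p x n) (q n - 1) : ℝ) / ∏ i ∈ Finset.range (n + 1), (q i : ℝ) with hfdef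
  have hPt : (0:ℝ) < ∏ i ∈ Finset.range t, (p i : ℝ) := prodPos p hp t
  have hQt : (0:ℝ) < ∏ i ∈ Finset.range t, (q i : ℝ) := prodPos q hq t
  -- pointwise identity for n ≥ t
  have hpt : ∀ m, t ≤ m → f m = c * g m := by
    intro m hm
    have hdig : cantorDigit p x m < p m := Nat.mod_lt _ (by have := hp m; omega)
    have hminR : min (cantorDigit p x m : ℝ) ((q m : ℝ) - 1) = (cantorDigit p x m : ℝ) := by
      apply min_eq_left
      rw [le_sub_iff_add_le]
      have h1 : cantorDigit p x m + 1 ≤ q m := by have := heq m hm; omega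
      exact_mod_cast h1
    have hprodeq : (∏ i ∈ Finset.range (m + 1), (q i : ℝ)) * ∏ i ∈ Finset.range t, (p i : ℝ)
        = (∏ i ∈ Finset.range (m + 1), (p i : ℝ)) * ∏ i ∈ Finset.range t, (q i : ℝ) := by
      have hsplit : ∀ r : ℕ → ℕ, (∏ i ∈ Finset.range (m + 1), (r i : ℝ))
          = (∏ i ∈ Finset.range t, (r i : ℝ)) * ∏ i ∈ Finset.Ico t (m + 1), (r i : ℝ) := by
        intro r
        rw [Finset.range_eq_Ico, ← Finset.prod_Ico_consecutive _ (Nat.zero_le t)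
          (by omega : t ≤ m + 1), ← Finset.range_eq_Ico]
      have hmid : (∏ i ∈ Finset.Ico t (m + 1), (p i : ℝ))
          = ∏ i ∈ Finset.Ico t (m + 1), (q i : ℝ) := by
        apply Finset.prod_congr rfl
        intro i hi
        rw [heq i (Finset.mem_Ico.1 hi).1]
      rw [hsplit p, hsplit q, hmid]
      ring
    have hPm : (0:ℝ) < ∏ i ∈ Finset.range (m + 1), (p i : ℝ) := prodPos p hp (m + 1)
    have hQm : (0:ℝ) < ∏ i ∈ Finset.range (m + 1), (q i : ℝ) := prodPos q hq (m + 1)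
    simp only [hfdef, hgdef, hc]
    rw [hminR, div_mul_div_comm, div_eq_div_iff hQm.ne' (mul_pos hQt hPm).ne']
    linear_combination -(cantorDigit p x m : ℝ) * hprodeq
  have hg : HasSum g F := hasSum_digits p hp x
  have hg' : HasSum (fun n => g (n + t)) (F - ∑ n ∈ Finset.range t, g n) := by
    apply (hasSum_nat_add_iff t).2
    simpa using hg
  have hf' : HasSum (fun n => f (n + t)) (c * (F - ∑ n ∈ Finset.range t, g n)) := by
    have hptwise : (fun n => f (n + t)) = fun n => c * g (n + t) :=
      funext fun n => hpt (n + t) (by omega)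
    rw [hptwise]
    exact hg'.mul_left c
  have hf : HasSum f (c * (F - ∑ n ∈ Finset.range t, g n) + ∑ n ∈ Finset.range t, f n) :=
    (hasSum_nat_add_iff t).1 hf'
  have hpsi : psiPQ p q x
      = c * (F - ∑ n ∈ Finset.range t, g n) + ∑ n ∈ Finset.range t, f n := hf.tsum_eq
  rw [hpsi]
  ring
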